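/- For every λ > 0 and all x, y ∈ V, there exists f ∈ Lip_w^1(V) such that ⟨J_λ f, δ_x − δ_y⟩ = KD_λ(x,y) (a λ-nonlinear Kantorovich potential). -/

import Mathlib

open scoped BigOperators

noncomputable section

namespace HypRicci

variable {V : Type*} [Fintype V] [DecidableEq V]

/-- A finite weighted hypergraph on vertex set `V`: a finite set of nonempty
hyperedges together with positive weights. -/
structure Hypergraph (V : Type*) [Fintype V] [DecidableEq V] : Type _ where
  E : Finset (Finset V)
  w : Finset V → ℝ
  w_pos : ∀ e ∈ E, 0 < w e
  e_nonempty : ∀ e ∈ E, e.Nonempty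

/-- Degree `d_x = ∑_{e ∋ x} w(e)`. -/
def deg (H : Hypergraph V) (x : V) : ℝ := ∑ e ∈ H.E, if x ∈ e then H.w e else 0

/-- Volume `vol(V) = ∑_x d_x`. -/
def vol (H : Hypergraph V) : ℝ := ∑ x, deg H x

/-- Weighted inner product `⟨f,g⟩ = ∑_x f(x) g(x) / d_x`. -/
def inn (H : Hypergraph V) (f g : V → ℝ) : ℝ := ∑ x, f x * g x / deg H x

/-- Norm associated to `inn`. -/
def nrm (H : Hypergraph V) (f : V → ℝ) : ℝ := Real.sqrt (inn H f f)

/-- Indicator function `δ_x`. -/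
def delta (x : V) : V → ℝ := fun z => if z = x then 1 else 0

/-- Standard (unweighted) dot product `u^⊤ v`. -/
def dot (u v : V → ℝ) : ℝ := ∑ x, u x * v x

/-- Base polytope `B_e = conv{δ_x − δ_y : x,y ∈ e}`. -/
def Bp (e : Finset V) : Set (V → ℝ) :=
  convexHull ℝ {b : V → ℝ | ∃ x ∈ e, ∃ y ∈ e, b = delta x - delta y}

/-- The multivalued hypergraph Laplacian
`L(f) = {∑_e w(e) (b_e^⊤ f) b_e : b_e ∈ argmax_{b ∈ B_e} b^⊤ f}`. -/
def Lap (H : Hypergraph V) (f : V → ℝ) : Set (V → ℝ) :=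
  { g | ∃ b : Finset V → (V → ℝ),
      (∀ e ∈ H.E, b e ∈ Bp e ∧ ∀ b' ∈ Bp e, dot b' f ≤ dot (b e) f) ∧
      g = ∑ e ∈ H.E, (H.w e * dot (b e) f) • b e }

/-- `D⁻¹ f`. -/
def Dinv (H : Hypergraph V) (f : V → ℝ) : V → ℝ := fun x => f x / deg H x

/-- Normalized Laplacian `𝓛(f) = L(D⁻¹ f)`. -/
def NL (H : Hypergraph V) (f : V → ℝ) : Set (V → ℝ) := Lap H (Dinv H f)

/-- The resolvent `J_λ = (I + λ𝓛)⁻¹`: it sends `f` to the (unique) `g` with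
`f ∈ g + λ 𝓛(g)`. -/
def Resolvent (H : Hypergraph V) (l : ℝ) (f : V → ℝ) : V → ℝ :=
  Classical.epsilon fun g => ∃ h ∈ NL H g, f = g + l • h

/-- Adjacency: `x ∼ y` iff some hyperedge contains both. -/
def Adj (H : Hypergraph V) (x y : V) : Prop := ∃ e ∈ H.E, x ∈ e ∧ y ∈ e

/-- There is a chain of length `n` of successively adjacent vertices from `x` to `y`. -/
def chainProp (H : Hypergraph V) (x y : V) (n : ℕ) : Prop :=
  ∃ z : ℕ → V, z 0 = x ∧ z n = y ∧ ∀ i < n, Adj H (z i) (z (i + 1))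

/-- Connectedness of the hypergraph. -/
def Connected (H : Hypergraph V) : Prop := ∀ x y : V, ∃ n, chainProp H x y n

/-- Graph distance (as a natural number). -/
def hdistN (H : Hypergraph V) (x y : V) : ℕ := sInf {n | chainProp H x y n}

/-- Graph distance `d(x,y)` as a real number. -/
def gdist (H : Hypergraph V) (x y : V) : ℝ := (hdistN H x y : ℝ)

/-- Diameter `diam(H) = max_{x,y} d(x,y)`. -/
def hdiam (H : Hypergraph V) : ℝ :=
  (((Finset.univ : Finset (V × V)).sup fun p => hdistN H p.1 p.2 : ℕ) : ℝ)

/-- Weighted `1`-Lipschitz functions: `⟨f, δ_x − δ_y⟩ ≤ d(x,y)` for all `x, y`. -/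
def Lip1 (H : Hypergraph V) : Set (V → ℝ) :=
  { f | ∀ x y : V, inn H f (delta x - delta y) ≤ gdist H x y }

/-- The `λ`-nonlinear Kantorovich difference. -/
def KD (H : Hypergraph V) (l : ℝ) (x y : V) : ℝ :=
  sSup { r | ∃ f ∈ Lip1 H, r = inn H (Resolvent H l f) (delta x - delta y) }

/-- `κ_λ(x,y) = 1 − KD_λ(x,y)/d(x,y)`. -/
def kappa (H : Hypergraph V) (l : ℝ) (x y : V) : ℝ := 1 - KD H l x y / gdist H x y

/-- Lower coarse Ricci curvature `κ̲(x,y) = liminf_{λ↓0} κ_λ(x,y)/λ`. -/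
def kappaLower (H : Hypergraph V) (x y : V) : EReal :=
  Filter.liminf (fun l : ℝ => ((kappa H l x y / l : ℝ) : EReal)) (nhdsWithin 0 (Set.Ioi 0))

/-- Upper coarse Ricci curvature `κ̄(x,y) = limsup_{λ↓0} κ_λ(x,y)/λ`. -/
def kappaUpper (H : Hypergraph V) (x y : V) : EReal :=
  Filter.limsup (fun l : ℝ => ((kappa H l x y / l : ℝ) : EReal)) (nhdsWithin 0 (Set.Ioi 0))

/-- Canonical restriction `𝓛⁰ f`: the unique element of minimal norm of `𝓛(f)`. -/
def L0 (H : Hypergraph V) (f : V → ℝ) : V → ℝ :=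
  Classical.epsilon fun g => g ∈ NL H f ∧ ∀ h ∈ NL H f, nrm H g ≤ nrm H h

/-- The stationary distribution `π(x) = d_x / vol(V)`. -/
def piH (H : Hypergraph V) : V → ℝ := fun x => deg H x / vol H

/-- The energy `Q(h) = (1/2) ∑_e w(e) max_{x,y ∈ e} (h(x) − h(y))²`. -/
def Qform (H : Hypergraph V) (h : V → ℝ) : ℝ :=
  (1 / 2) * ∑ e ∈ H.E, H.w e * sSup { r | ∃ x ∈ e, ∃ y ∈ e, r = (h x - h y) ^ 2 }




def bvec (p : V × V) : V → ℝ := delta p.1 - delta p.2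

lemma dot_delta (x : V) (v : V → ℝ) : dot (delta x) v = v x := by
  simp [dot, delta, Finset.sum_ite_eq']

lemma dot_bvec (p : V × V) (v : V → ℝ) : dot (bvec p) v = v p.1 - v p.2 := by
  simp only [bvec, dot]
  rw [show ∑ x, (delta p.1 - delta p.2) x * v x
      = ∑ x, (delta p.1 x * v x - delta p.2 x * v x) from by
    refine Finset.sum_congr rfl fun z _ => by simp [sub_mul]]
  rw [Finset.sum_sub_distrib]
  have h1 := dot_delta p.1 v
  have h2 := dot_delta p.2 v
  simp only [dot] at h1 h2
  rw [h1, h2]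

lemma dot_add_right (u v w : V → ℝ) : dot u (v + w) = dot u v + dot u w := by
  simp [dot, mul_add, Finset.sum_add_distrib]

lemma dot_smul_right (u : V → ℝ) (c : ℝ) (v : V → ℝ) : dot u (c • v) = c * dot u v := by
  simp only [dot, Pi.smul_apply, smul_eq_mul, Finset.mul_sum]
  exact Finset.sum_congr rfl fun z _ => by ring

lemma dot_smul_left (c : ℝ) (u v : V → ℝ) : dot (c • u) v = c * dot u v := by
  simp only [dot, Pi.smul_apply, smul_eq_mul, Finset.mul_sum]
  exact Finset.sum_congr rfl fun z _ => by ring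

lemma dot_sum_left {ι : Type*} (s : Finset ι) (F : ι → V → ℝ) (v : V → ℝ) :
    dot (∑ i ∈ s, F i) v = ∑ i ∈ s, dot (F i) v := by
  simp only [dot, Finset.sum_apply, Finset.sum_mul]
  rw [Finset.sum_comm]

def dotL (v : V → ℝ) : (V → ℝ) →ₗ[ℝ] ℝ where
  toFun := fun b => dot b v
  map_add' := fun a b => by simp [dot, add_mul, Finset.sum_add_distrib]
  map_smul' := fun c a => by simpa using dot_smul_left c a v

-- pairs of an edge

def pr (e : Finset V) : Finset (V × V) := e ×ˢ e

lemma pr_nonempty {e : Finset V} (he : e.Nonempty) : (pr e).Nonempty := by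
  obtain ⟨x, hx⟩ := he; exact ⟨(x, x), by simp [pr, hx]⟩

open Classical in

def mval (e : Finset V) (v : V → ℝ) : ℝ :=
  if h : (pr e).Nonempty then (pr e).sup' h (fun p => v p.1 - v p.2) else 0

lemma mval_eq {e : Finset V} (he : (pr e).Nonempty) (v : V → ℝ) :
    mval e v = (pr e).sup' he (fun p => v p.1 - v p.2) := by
  rw [mval, dif_pos he]

lemma le_mval {e : Finset V} {p : V × V} (hp : p ∈ pr e) (v : V → ℝ) :
    v p.1 - v p.2 ≤ mval e v := by
  rw [mval_eq ⟨p, hp⟩ v]; exact Finset.le_sup' (fun p => v p.1 - v p.2) hp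

lemma mval_nonneg {e : Finset V} (he : e.Nonempty) (v : V → ℝ) : 0 ≤ mval e v := by
  obtain ⟨x, hx⟩ := he
  have : (x, x) ∈ pr e := by simp [pr, hx]
  simpa using le_mval this v

lemma exists_mval {e : Finset V} (he : e.Nonempty) (v : V → ℝ) :
    ∃ p ∈ pr e, v p.1 - v p.2 = mval e v := by
  have hne := pr_nonempty he
  obtain ⟨p, hp, hval⟩ := Finset.exists_mem_eq_sup' hne (fun p => v p.1 - v p.2)
  exact ⟨p, hp, by rw [mval_eq hne, hval]⟩


-- argmax pairs

open Classical in

def Ae (e : Finset V) (v : V → ℝ) : Finset (V × V) :=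
  (pr e).filter (fun p => v p.1 - v p.2 = mval e v)

lemma Ae_nonempty {e : Finset V} (he : e.Nonempty) (v : V → ℝ) : (Ae e v).Nonempty := by
  obtain ⟨p, hp, hv⟩ := exists_mval he v
  exact ⟨p, by simp [Ae, hp, hv]⟩

lemma Ae_subset {e : Finset V} {v : V → ℝ} : Ae e v ⊆ pr e := Finset.filter_subset _ _

lemma Ae_val {e : Finset V} {v : V → ℝ} {p : V × V} (hp : p ∈ Ae e v) :
    v p.1 - v p.2 = mval e v := by
  classical
  exact (Finset.mem_filter.1 hp).2

open Classical in

def sval (e : Finset V) (v w : V → ℝ) : ℝ :=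
  if h : (Ae e v).Nonempty then (Ae e v).sup' h (fun p => w p.1 - w p.2) else 0

lemma sval_eq {e : Finset V} {v : V → ℝ} (he : (Ae e v).Nonempty) (w : V → ℝ) :
    sval e v w = (Ae e v).sup' he (fun p => w p.1 - w p.2) := by
  rw [sval, dif_pos he]

lemma le_sval {e : Finset V} {v : V → ℝ} {p : V × V} (hp : p ∈ Ae e v) (w : V → ℝ) :
    w p.1 - w p.2 ≤ sval e v w := by
  rw [sval_eq ⟨p, hp⟩ w]; exact Finset.le_sup' (fun p => w p.1 - w p.2) hp

lemma exists_sval {e : Finset V} (he : e.Nonempty) (v w : V → ℝ) :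
    ∃ p ∈ Ae e v, w p.1 - w p.2 = sval e v w := by
  have hne := Ae_nonempty he v
  obtain ⟨p, hp, hval⟩ := Finset.exists_mem_eq_sup' hne (fun p => w p.1 - w p.2)
  exact ⟨p, hp, by rw [sval_eq hne, hval]⟩

-- small-step threshold

open Classical in

def t0 (e : Finset V) (v w : V → ℝ) : ℝ :=
  if h : (pr e).Nonempty then
    (pr e).inf' h (fun p =>
      if sval e v w < w p.1 - w p.2 ∧ v p.1 - v p.2 < mval e v then
        (mval e v - (v p.1 - v p.2)) / ((w p.1 - w p.2) - sval e v w)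
      else 1)
  else 1

lemma t0_pos (e : Finset V) (v w : V → ℝ) : 0 < t0 e v w := by
  classical
  rw [t0]
  split_ifs with h
  · rw [Finset.lt_inf'_iff]
    intro p hp
    split_ifs with hc
    · exact div_pos (by linarith [hc.2]) (by linarith [hc.1])
    · norm_num
  · norm_num

lemma mval_add_smul {e : Finset V} (he : e.Nonempty) (v w : V → ℝ) {t : ℝ}
    (ht : 0 ≤ t) (ht' : t ≤ t0 e v w) :
    mval e (v + t • w) = mval e v + t * sval e v w := by
  classical
  have hne := pr_nonempty he
  apply le_antisymm
  · rw [mval_eq hne]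
    apply Finset.sup'_le
    intro p hp
    simp only [Pi.add_apply, Pi.smul_apply, smul_eq_mul]
    have ht0 : t0 e v w ≤ (if sval e v w < w p.1 - w p.2 ∧ v p.1 - v p.2 < mval e v then
        (mval e v - (v p.1 - v p.2)) / ((w p.1 - w p.2) - sval e v w) else 1) := by
      rw [t0, dif_pos hne]
      exact Finset.inf'_le _ hp
    by_cases hA : p ∈ Ae e v
    · have h1 := Ae_val hA
      have h2 := le_sval hA w
      nlinarith
    · have hlt : v p.1 - v p.2 < mval e v :=
        lt_of_le_of_ne (le_mval hp v) (by simpa [Ae, hp] using hA)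
      by_cases hw : w p.1 - w p.2 ≤ sval e v w
      · nlinarith [le_mval hp v]
      · push_neg at hw
        rw [if_pos ⟨hw, hlt⟩] at ht0
        have := le_trans ht' ht0
        rw [le_div_iff₀ (by linarith)] at this
        nlinarith
  · obtain ⟨p, hp, hs⟩ := exists_sval he v w
    have hm := Ae_val hp
    have : (v + t • w) p.1 - (v + t • w) p.2 ≤ mval e (v + t • w) :=
      le_mval (Ae_subset hp) _
    simp only [Pi.add_apply, Pi.smul_apply, smul_eq_mul] at this
    nlinarith


-- Bp lemmas

lemma bvec_mem_Bp {e : Finset V} {p : V × V} (hp : p ∈ pr e) : bvec p ∈ Bp e := by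
  apply subset_convexHull
  exact ⟨p.1, by simpa [pr] using (Finset.mem_product.1 hp).1,
         p.2, by simpa [pr] using (Finset.mem_product.1 hp).2, rfl⟩

lemma dot_le_mval_of_mem_Bp {e : Finset V} {b : V → ℝ} (hb : b ∈ Bp e) (v : V → ℝ) :
    dot b v ≤ mval e v := by
  have hsub : {b : V → ℝ | ∃ x ∈ e, ∃ y ∈ e, b = delta x - delta y}
      ⊆ {b : V → ℝ | dotL v b ≤ mval e v} := by
    rintro b ⟨x, hx, y, hy, rfl⟩
    have hp : ((x, y) : V × V) ∈ pr e := Finset.mem_product.2 ⟨hx, hy⟩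
    simp only [Set.mem_setOf_eq]
    have hd : dotL v (delta x - delta y) = v x - v y := by
      show dot (delta x - delta y) v = _
      simpa [bvec] using dot_bvec (x, y) v
    rw [hd]; exact le_mval hp v
  have hconv : Convex ℝ {b : V → ℝ | dotL v b ≤ mval e v} :=
    convex_halfSpace_le (LinearMap.isLinear (dotL v)) (mval e v)
  have := convexHull_min hsub hconv hb
  exact this

lemma dot_const_of_mem_Bp {e : Finset V} {b : V → ℝ} (hb : b ∈ Bp e) (c : ℝ) :
    dot b (fun _ => (c : ℝ) : V → ℝ) = 0 := by
  have hsub : {b : V → ℝ | ∃ x ∈ e, ∃ y ∈ e, b = delta x - delta y}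
      ⊆ (LinearMap.ker (dotL (fun _ => (c : ℝ) : V → ℝ)) : Set (V → ℝ)) := by
    rintro b ⟨x, hx, y, hy, rfl⟩
    have : dot (bvec (x, y)) (fun _ => (c : ℝ) : V → ℝ) = 0 := by rw [dot_bvec]; simp
    exact this
  have hconv : Convex ℝ (LinearMap.ker (dotL (fun _ => (c : ℝ) : V → ℝ)) : Set (V → ℝ)) :=
    (LinearMap.ker (dotL (fun _ => (c : ℝ) : V → ℝ))).convex
  have := convexHull_min hsub hconv hb
  exact this

lemma dot_eq_mval_of_argmax {e : Finset V} (he : e.Nonempty) {v : V → ℝ} {b : V → ℝ}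
    (hb : b ∈ Bp e) (hmax : ∀ b' ∈ Bp e, dot b' v ≤ dot b v) : dot b v = mval e v := by
  apply le_antisymm (dot_le_mval_of_mem_Bp hb v)
  obtain ⟨p, hp, hval⟩ := exists_mval he v
  have := hmax (bvec p) (bvec_mem_Bp hp)
  rw [dot_bvec] at this
  linarith


-- remaining original defs

lemma dot_sub_right (u v w : V → ℝ) : dot u (v - w) = dot u v - dot u w := by
  simp [dot, mul_sub, Finset.sum_sub_distrib]

lemma dot_sub_left (u v w : V → ℝ) : dot (u - v) w = dot u w - dot v w := by
  simp [dot, sub_mul, Finset.sum_sub_distrib]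

-- inn lemmas

lemma inn_eq_dot_Dinv (H : Hypergraph V) (a u : V → ℝ) : inn H a u = dot a (Dinv H u) := by
  refine Finset.sum_congr rfl fun z _ => ?_
  simp [Dinv, mul_div_assoc]

lemma Dinv_sub (H : Hypergraph V) (a b : V → ℝ) :
    Dinv H (a - b) = Dinv H a - Dinv H b := by
  funext z; simp [Dinv, sub_div]

lemma Dinv_add (H : Hypergraph V) (a b : V → ℝ) :
    Dinv H (a + b) = Dinv H a + Dinv H b := by
  funext z; simp [Dinv, add_div]

lemma Dinv_smul (H : Hypergraph V) (c : ℝ) (a : V → ℝ) :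
    Dinv H (c • a) = c • Dinv H a := by
  funext z; simp [Dinv, mul_div_assoc]

lemma inn_self_nonneg (H : Hypergraph V) (hdeg : ∀ x : V, 0 < deg H x) (u : V → ℝ) :
    0 ≤ inn H u u :=
  Finset.sum_nonneg fun z _ => div_nonneg (mul_self_nonneg _) (le_of_lt (hdeg z))

lemma eq_zero_of_inn_self (H : Hypergraph V) (hdeg : ∀ x : V, 0 < deg H x) {u : V → ℝ}
    (h : inn H u u ≤ 0) : u = 0 := by
  have h0 : inn H u u = 0 :=
    le_antisymm h (inn_self_nonneg H hdeg u)
  have := (Finset.sum_eq_zero_iff_of_nonneg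
    (fun z _ => div_nonneg (mul_self_nonneg (u z)) (le_of_lt (hdeg z)))).1 h0
  funext z
  have hz := this z (Finset.mem_univ z)
  have hd := hdeg z
  have : u z * u z = 0 := by
    field_simp at hz
    linear_combination hz
  simpa [mul_self_eq_zero] using this

-- structure of NL elements: dot with v equals mval

lemma NL_elt (H : Hypergraph V) {g h : V → ℝ} (hh : h ∈ NL H g) :
    ∃ b : Finset V → (V → ℝ),
      (∀ e ∈ H.E, b e ∈ Bp e ∧ dot (b e) (Dinv H g) = mval e (Dinv H g)) ∧
      h = ∑ e ∈ H.E, (H.w e * mval e (Dinv H g)) • b e := by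
  obtain ⟨b, hb, rfl⟩ := hh
  refine ⟨b, fun e he => ⟨(hb e he).1,
    dot_eq_mval_of_argmax (H.e_nonempty e he) (hb e he).1 (hb e he).2⟩, ?_⟩
  refine Finset.sum_congr rfl fun e he => ?_
  rw [dot_eq_mval_of_argmax (H.e_nonempty e he) (hb e he).1 (hb e he).2]

lemma dot_NL (H : Hypergraph V) {g h : V → ℝ} (hh : h ∈ NL H g) (u : V → ℝ) :
    ∃ b : Finset V → (V → ℝ), (∀ e ∈ H.E, b e ∈ Bp e) ∧
      dot h u = ∑ e ∈ H.E, H.w e * mval e (Dinv H g) * dot (b e) u ∧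
      (∀ e ∈ H.E, dot (b e) (Dinv H g) = mval e (Dinv H g)) := by
  obtain ⟨b, hb, rfl⟩ := NL_elt H hh
  refine ⟨b, fun e he => (hb e he).1, ?_, fun e he => (hb e he).2⟩
  rw [dot_sum_left]
  exact Finset.sum_congr rfl fun e he => by rw [dot_smul_left]

-- monotonicity

lemma NL_mono (H : Hypergraph V) {g₁ g₂ h₁ h₂ : V → ℝ}
    (m₁ : h₁ ∈ NL H g₁) (m₂ : h₂ ∈ NL H g₂) :
    0 ≤ inn H (h₁ - h₂) (g₁ - g₂) := by
  have hveq : True := trivial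
  obtain ⟨b₁, hb₁, hd₁, ha₁⟩ := dot_NL H m₁ (Dinv H g₁ - Dinv H g₂)
  obtain ⟨b₂, hb₂, hd₂, ha₂⟩ := dot_NL H m₂ (Dinv H g₁ - Dinv H g₂)
  rw [inn_eq_dot_Dinv, Dinv_sub, dot_sub_left, hd₁, hd₂, ← Finset.sum_sub_distrib]
  apply Finset.sum_nonneg
  intro e he
  have hw := H.w_pos e he
  have hne := H.e_nonempty e he
  have ha1 : 0 ≤ mval e (Dinv H g₁) := mval_nonneg hne (Dinv H g₁)
  have ha2 : 0 ≤ mval e (Dinv H g₂) := mval_nonneg hne (Dinv H g₂)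
  have h12 : dot (b₁ e) (Dinv H g₂) ≤ mval e (Dinv H g₂) := dot_le_mval_of_mem_Bp (hb₁ e he) (Dinv H g₂)
  have h21 : dot (b₂ e) (Dinv H g₁) ≤ mval e (Dinv H g₁) := dot_le_mval_of_mem_Bp (hb₂ e he) (Dinv H g₁)
  have e1 : dot (b₁ e) (Dinv H g₁ - Dinv H g₂) = mval e (Dinv H g₁) - dot (b₁ e) (Dinv H g₂) := by
    rw [dot_sub_right, ha₁ e he]
  have e2 : dot (b₂ e) (Dinv H g₁ - Dinv H g₂) = dot (b₂ e) (Dinv H g₁) - mval e (Dinv H g₂) := by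
    rw [dot_sub_right, ha₂ e he]
  rw [e1, e2]
  have k1 : 0 ≤ mval e (Dinv H g₁) * (mval e (Dinv H g₂) - dot (b₁ e) (Dinv H g₂)) :=
    mul_nonneg ha1 (by linarith)
  have k2 : 0 ≤ mval e (Dinv H g₂) * (mval e (Dinv H g₁) - dot (b₂ e) (Dinv H g₁)) :=
    mul_nonneg ha2 (by linarith)
  have inner : 0 ≤ mval e (Dinv H g₁) * (mval e (Dinv H g₁) - dot (b₁ e) (Dinv H g₂))
      - mval e (Dinv H g₂) * (dot (b₂ e) (Dinv H g₁) - mval e (Dinv H g₂)) := by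
    nlinarith [sq_nonneg (mval e (Dinv H g₁) - mval e (Dinv H g₂)), k1, k2]
  nlinarith [mul_nonneg (le_of_lt hw) inner]

-- inn bilinearity

lemma inn_add_left (H : Hypergraph V) (a b c : V → ℝ) :
    inn H (a + b) c = inn H a c + inn H b c := by
  simp [inn, add_mul, add_div, Finset.sum_add_distrib]

lemma inn_smul_left (H : Hypergraph V) (r : ℝ) (a c : V → ℝ) :
    inn H (r • a) c = r * inn H a c := by
  simp only [inn, Pi.smul_apply, smul_eq_mul, Finset.mul_sum]
  exact Finset.sum_congr rfl fun z _ => by ring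

lemma inn_sub_left (H : Hypergraph V) (a b c : V → ℝ) :
    inn H (a - b) c = inn H a c - inn H b c := by
  simp [inn, sub_mul, sub_div, Finset.sum_sub_distrib]

-- uniqueness of resolvent

lemma resolvent_unique (H : Hypergraph V) (hdeg : ∀ x : V, 0 < deg H x) {l : ℝ} (hl : 0 < l)
    {g₁ g₂ h₁ h₂ : V → ℝ} (m₁ : h₁ ∈ NL H g₁) (m₂ : h₂ ∈ NL H g₂)
    (heq : g₁ + l • h₁ = g₂ + l • h₂) : g₁ = g₂ := by
  have hmono := NL_mono H m₁ m₂
  have hzero : (g₁ - g₂) + l • (h₁ - h₂) = 0 := by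
    funext z
    have hz := congrFun heq z
    simp only [Pi.add_apply, Pi.smul_apply, smul_eq_mul] at hz
    simp only [Pi.add_apply, Pi.sub_apply, Pi.smul_apply, smul_eq_mul, Pi.zero_apply]
    linarith
  have h0 : inn H ((g₁ - g₂) + l • (h₁ - h₂)) (g₁ - g₂) = 0 := by
    rw [hzero]; simp [inn]
  rw [inn_add_left, inn_smul_left] at h0
  have : inn H (g₁ - g₂) (g₁ - g₂) ≤ 0 := by nlinarith
  have := eq_zero_of_inn_self H hdeg this
  have := sub_eq_zero.1 this
  exact this

lemma continuous_mval {e : Finset V} (he : e.Nonempty) :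
    Continuous (fun v : V → ℝ => mval e v) := by
  have hne := pr_nonempty he
  have hrw : (fun v : V → ℝ => mval e v)
      = fun v => (pr e).sup' hne (fun p => v p.1 - v p.2) := funext fun v => mval_eq hne v
  rw [hrw]
  exact Continuous.finset_sup'_apply hne
    (fun p _ => (continuous_apply p.1).sub (continuous_apply p.2))

lemma inn_quad (H : Hypergraph V) (hdeg : ∀ x : V, 0 < deg H x) (a u0 : V → ℝ) (t : ℝ) :
    inn H (a + t • u0) (a + t • u0)
      = inn H a a + 2 * t * inn H a u0 + t ^ 2 * inn H u0 u0 := by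
  simp only [inn, Pi.add_apply, Pi.smul_apply, smul_eq_mul, Finset.mul_sum,
    ← Finset.sum_add_distrib]
  refine Finset.sum_congr rfl fun z _ => ?_
  have hz := (hdeg z).ne'
  field_simp
  ring

-- the global minimizer of the Moreau--Yosida functional exists

lemma exists_min_G [Nonempty V] (H : Hypergraph V) (hdeg : ∀ x : V, 0 < deg H x)
    {l : ℝ} (hl : 0 < l) (f : V → ℝ) (G : (V → ℝ) → ℝ)
    (hGdef : G = fun g => (1/2) * inn H (g - f) (g - f)
      + l * ((1/2) * ∑ e ∈ H.E, H.w e * (mval e (Dinv H g))^2)) :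
    ∃ g : V → ℝ, ∀ g' : V → ℝ, G g ≤ G g' := by
  classical
  have hPhi_nonneg : ∀ v : V → ℝ, 0 ≤ (1/2 : ℝ) * ∑ e ∈ H.E, H.w e * (mval e v)^2 :=
    fun v => mul_nonneg (by norm_num) (Finset.sum_nonneg fun e he =>
      mul_nonneg (le_of_lt (H.w_pos e he)) (sq_nonneg _))
  have hG_cont : Continuous G := by
    rw [hGdef]
    have h1 : Continuous fun g : V → ℝ => inn H (g - f) (g - f) := by
      unfold inn
      apply continuous_finset_sum
      intro z _
      exact ((((continuous_apply z).sub continuous_const)).mul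
        (((continuous_apply z).sub continuous_const))).div_const _
    have hDinv : Continuous (fun g : V → ℝ => Dinv H g) :=
      continuous_pi fun z => (continuous_apply z).div_const _
    have hPhi_cont : Continuous fun v : V → ℝ =>
        (1/2 : ℝ) * ∑ e ∈ H.E, H.w e * (mval e v)^2 :=
      continuous_const.mul (continuous_finset_sum _ fun e he =>
        continuous_const.mul ((continuous_mval (H.e_nonempty e he)).pow 2))
    exact (continuous_const.mul h1).add (continuous_const.mul (hPhi_cont.comp hDinv))
  -- compact box
  have hGf_nonneg : 0 ≤ G f := by
    rw [hGdef]
    simp only [sub_self]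
    have : inn H (0 : V → ℝ) (0 : V → ℝ) = 0 := by simp [inn]
    rw [this]
    have := hPhi_nonneg (Dinv H f)
    nlinarith
  obtain ⟨dmax, hdmax⟩ : ∃ dmax : ℝ, (0 < dmax) ∧ ∀ z : V, deg H z ≤ dmax := by
    refine ⟨Finset.univ.sup' Finset.univ_nonempty (deg H), ?_, ?_⟩
    · obtain ⟨z⟩ := (inferInstance : Nonempty V)
      exact lt_of_lt_of_le (hdeg z) (Finset.le_sup' _ (Finset.mem_univ z))
    · exact fun z => Finset.le_sup' _ (Finset.mem_univ z)
  set R := Real.sqrt (dmax * (2 * G f + 1)) with hR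
  have hRnn : 0 ≤ R := Real.sqrt_nonneg _
  set K : Set (V → ℝ) := Set.univ.pi (fun z => Set.Icc (f z - R) (f z + R)) with hK
  have hKcomp : IsCompact K := isCompact_univ_pi fun z => isCompact_Icc
  have hfK : f ∈ K := by
    intro z _
    exact ⟨by linarith, by linarith⟩
  obtain ⟨g, hgK, hgmin⟩ := hKcomp.exists_isMinOn ⟨f, hfK⟩ hG_cont.continuousOn
  refine ⟨g, fun g' => ?_⟩
  by_cases hg' : g' ∈ K
  · exact hgmin hg'
  · -- outside the box, G is large
    have hout : G f < G g' := by
      simp only [hK, Set.mem_pi, Set.mem_univ, forall_true_left, Set.mem_Icc] at hg'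
      push_neg at hg'
      obtain ⟨z, hz⟩ := hg'
      have habs : R < |g' z - f z| := by
        by_cases hlt : g' z < f z - R
        · rw [abs_of_neg (by linarith)]; linarith
        · have := hz (by linarith [not_lt.1 hlt])
          rw [abs_of_pos (by linarith)]; linarith
      have hsq : dmax * (2 * G f + 1) < (g' z - f z)^2 := by
        have := Real.sq_sqrt (by nlinarith : (0:ℝ) ≤ dmax * (2 * G f + 1))
        nlinarith [sq_abs (g' z - f z), abs_nonneg (g' z - f z)]
      have hterm : (g' z - f z)^2 / dmax ≤ inn H (g' - f) (g' - f) := by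
        have h0 : (g' z - f z) * (g' z - f z) / deg H z ≤ inn H (g' - f) (g' - f) := by
          unfold inn
          exact Finset.single_le_sum (f := fun z => (g' - f) z * (g' - f) z / deg H z)
            (fun z _ => div_nonneg (mul_self_nonneg _) (le_of_lt (hdeg z)))
            (Finset.mem_univ z)
        calc (g' z - f z)^2 / dmax ≤ (g' z - f z)^2 / deg H z := by
              apply div_le_div_of_nonneg_left (sq_nonneg _) (hdeg z) (hdmax.2 z)
          _ ≤ inn H (g' - f) (g' - f) := by rw [sq]; exact h0
      have h1 : 2 * G f + 1 < inn H (g' - f) (g' - f) := by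
        have h2 : 2 * G f + 1 < (g' z - f z)^2 / dmax := by
          rw [lt_div_iff₀ hdmax.1]; nlinarith
        linarith
      have hGg'_ge : (1/2) * inn H (g' - f) (g' - f) ≤ G g' := by
        rw [hGdef]
        simp only
        nlinarith [mul_nonneg hl.le (hPhi_nonneg (Dinv H g'))]
      linarith
    calc G g ≤ G f := hgmin hfK
      _ ≤ G g' := le_of_lt hout

lemma resolvent_exists [Nonempty V] (H : Hypergraph V) (hdeg : ∀ x : V, 0 < deg H x)
    {l : ℝ} (hl : 0 < l) (f : V → ℝ) :
    ∃ g, ∃ h ∈ NL H g, f = g + l • h := by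
  classical
  set G : (V → ℝ) → ℝ := fun g => (1/2) * inn H (g - f) (g - f)
      + l * ((1/2) * ∑ e ∈ H.E, H.w e * (mval e (Dinv H g))^2) with hGdef
  obtain ⟨g, hgmin⟩ := exists_min_G H hdeg hl f G hGdef
  set v : V → ℝ := Dinv H g with hv
  set p : V → ℝ := l⁻¹ • (f - g) with hp
  set S : Finset (Finset V → V × V) :=
    Finset.univ.filter (fun B => ∀ e ∈ H.E, B e ∈ Ae e v) with hS
  set C₀ : Finset (V → ℝ) :=
    S.image (fun B => ∑ e ∈ H.E, (H.w e * mval e v) • bvec (B e)) with hC₀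
  have hmem : p ∈ convexHull ℝ (C₀ : Set (V → ℝ)) := by
    by_contra hnot
    obtain ⟨F, u, hFlt, hFp⟩ := geometric_hahn_banach_closed_point
      (convex_convexHull ℝ _) (C₀.finite_toSet.isClosed_convexHull ℝ) hnot
    set wF : V → ℝ := fun z => F (fun j => if z = j then 1 else 0) with hwF
    have hFdot : ∀ b : V → ℝ, F b = dot b wF := by
      intro b
      conv_lhs => rw [pi_eq_sum_univ b]
      rw [map_sum]
      simp only [map_smul, smul_eq_mul]
      simp [dot, hwF]
    set udir : V → ℝ := fun z => deg H z * wF z with hudir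
    have hDinvu : Dinv H udir = wF := by
      funext z
      simp only [Dinv, hudir]
      rw [mul_comm, mul_div_assoc, div_self (hdeg z).ne', mul_one]
    set t₁ : ℝ := if hE : H.E.Nonempty then H.E.inf' hE (fun e => t0 e v wF) else 1 with ht₁def
    have ht₁pos : 0 < t₁ := by
      rw [ht₁def]; split_ifs with hE
      · rw [Finset.lt_inf'_iff]; exact fun e _ => t0_pos e v wF
      · norm_num
    have ht₁le : ∀ e ∈ H.E, t₁ ≤ t0 e v wF := by
      intro e he
      rw [ht₁def, dif_pos ⟨e, he⟩]
      exact Finset.inf'_le _ he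
    obtain ⟨Bsel, hBsel⟩ : ∃ B : Finset V → V × V, ∀ e ∈ H.E, B e ∈ Ae e v ∧
        wF (B e).1 - wF (B e).2 = sval e v wF := by
      refine ⟨fun e => if h : e ∈ H.E then
        Classical.choose (exists_sval (H.e_nonempty e h) v wF)
        else (Classical.arbitrary V, Classical.arbitrary V), fun e he => ?_⟩
      dsimp only
      rw [dif_pos he]
      obtain ⟨h1, h2⟩ := Classical.choose_spec (exists_sval (H.e_nonempty e he) v wF)
      exact ⟨h1, h2⟩
    set cstar : V → ℝ := ∑ e ∈ H.E, (H.w e * mval e v) • bvec (Bsel e) with hcstar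
    have hcstarC : cstar ∈ C₀ := by
      rw [hC₀]
      refine Finset.mem_image.2 ⟨Bsel, ?_, rfl⟩
      rw [hS]
      simp only [Finset.mem_filter, Finset.mem_univ, true_and]
      exact fun e he => (hBsel e he).1
    have hsep : dot cstar wF < dot p wF := by
      have h1 := hFlt cstar (subset_convexHull ℝ _ (Finset.mem_coe.2 hcstarC))
      rw [hFdot] at h1
      rw [hFdot] at hFp
      linarith
    have hdotc : dot cstar wF = ∑ e ∈ H.E, H.w e * mval e v * sval e v wF := by
      rw [hcstar, dot_sum_left]
      refine Finset.sum_congr rfl fun e he => ?_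
      rw [dot_smul_left, dot_bvec, (hBsel e he).2]
    have hfg : dot (g - f) wF = - dot (f - g) wF := by
      rw [dot_sub_left, dot_sub_left]; ring
    have hdotp : dot (g - f) wF = - (l * dot p wF) := by
      rw [hp, dot_smul_left, hfg, ← mul_assoc, mul_inv_cancel₀ hl.ne', one_mul]
    have hexp : ∀ t : ℝ, 0 ≤ t → t ≤ t₁ →
        G (g + t • udir) = G g
          + t * (dot (g - f) wF + l * ∑ e ∈ H.E, H.w e * mval e v * sval e v wF)
          + t^2 * ((1/2) * inn H udir udir
              + l * ((1/2) * ∑ e ∈ H.E, H.w e * (sval e v wF)^2)) := by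
      intro t ht ht'
      have hDg : Dinv H (g + t • udir) = v + t • wF := by
        rw [hv]
        funext z
        simp only [Dinv, Pi.add_apply, Pi.smul_apply, smul_eq_mul, hudir]
        have hz := (hdeg z).ne'
        field_simp
      have habel : g + t • udir - f = (g - f) + t • udir := by abel
      have hquad : inn H (g + t • udir - f) (g + t • udir - f)
          = inn H (g - f) (g - f) + 2 * t * inn H (g - f) udir
            + t^2 * inn H udir udir := by
        rw [habel, inn_quad H hdeg]
      have hinngf : inn H (g - f) udir = dot (g - f) wF := by
        rw [inn_eq_dot_Dinv, hDinvu]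
      have hPhiExp : ∑ e ∈ H.E, H.w e * (mval e (v + t • wF))^2
          = ∑ e ∈ H.E, H.w e * (mval e v)^2
            + (2*t) * ∑ e ∈ H.E, H.w e * mval e v * sval e v wF
            + t^2 * ∑ e ∈ H.E, H.w e * (sval e v wF)^2 := by
        rw [Finset.mul_sum, Finset.mul_sum, ← Finset.sum_add_distrib, ← Finset.sum_add_distrib]
        refine Finset.sum_congr rfl fun e he => ?_
        rw [mval_add_smul (H.e_nonempty e he) v wF ht (le_trans ht' (ht₁le e he))]
        ring
      rw [hGdef]
      simp only
      rw [hquad, hDg, hPhiExp, hinngf]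
      ring
    set A : ℝ := l * (dot cstar wF - dot p wF) with hA
    have hAneg : A < 0 := mul_neg_of_pos_of_neg hl (by linarith)
    set Q : ℝ := (1/2) * inn H udir udir
        + l * ((1/2) * ∑ e ∈ H.E, H.w e * (sval e v wF)^2) with hQ
    have hQnn : 0 ≤ Q := by
      apply add_nonneg
      · exact mul_nonneg (by norm_num) (inn_self_nonneg H hdeg udir)
      · exact mul_nonneg hl.le (mul_nonneg (by norm_num) (Finset.sum_nonneg fun e he =>
          mul_nonneg (H.w_pos e he).le (sq_nonneg _)))
    have hcoef : dot (g - f) wF + l * ∑ e ∈ H.E, H.w e * mval e v * sval e v wF = A := by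
      rw [hA, hdotp, ← hdotc]; ring
    set t : ℝ := min t₁ (-A / (2 * (Q + 1))) with ht
    have htpos : 0 < t := lt_min ht₁pos (div_pos (neg_pos.2 hAneg) (by linarith))
    have hkey := hexp t htpos.le (min_le_left _ _)
    have hmin := hgmin (g + t • udir)
    rw [hkey, hcoef] at hmin
    have ht2 : t ≤ -A / (2 * (Q + 1)) := min_le_right _ _
    have h2 : t * (2 * (Q + 1)) ≤ -A := by
      rw [← le_div_iff₀ (by linarith : (0:ℝ) < 2 * (Q + 1))]
      exact ht2
    have h3 : t * (t * (2 * (Q + 1))) ≤ t * (-A) :=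
      mul_le_mul_of_nonneg_left h2 htpos.le
    nlinarith [hmin, h3, mul_nonneg (mul_nonneg htpos.le htpos.le) hQnn,
      mul_pos htpos htpos]
  obtain ⟨θ, hθ0, hθ1, hθsum⟩ := Finset.mem_convexHull'.1 hmem
  have hchoose : ∀ y ∈ C₀, ∃ B : Finset V → V × V, (∀ e ∈ H.E, B e ∈ Ae e v) ∧
      ∑ e ∈ H.E, (H.w e * mval e v) • bvec (B e) = y := by
    intro y hy
    rw [hC₀] at hy
    obtain ⟨B, hBS, hBy⟩ := Finset.mem_image.1 hy
    rw [hS] at hBS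
    simp only [Finset.mem_filter, Finset.mem_univ, true_and] at hBS
    exact ⟨B, hBS, hBy⟩
  choose! Bof hBof1 hBof2 using hchoose
  set bsel : Finset V → (V → ℝ) := fun e => ∑ y ∈ C₀, θ y • bvec (Bof y e) with hbsel
  have hbselBp : ∀ e ∈ H.E, bsel e ∈ Bp e := by
    intro e he
    exact Convex.sum_mem (convex_convexHull ℝ _) (fun y hy => hθ0 y hy) hθ1
      (fun y hy => bvec_mem_Bp (Ae_subset (hBof1 y hy e he)))
  have hbseldot : ∀ e ∈ H.E, dot (bsel e) v = mval e v := by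
    intro e he
    rw [show bsel e = ∑ y ∈ C₀, θ y • bvec (Bof y e) from rfl]
    rw [dot_sum_left,
      Finset.sum_congr rfl (fun y hy => by
        rw [dot_smul_left, dot_bvec, Ae_val (hBof1 y hy e he)]),
      ← Finset.sum_mul, hθ1, one_mul]
  have hpsum : p = ∑ e ∈ H.E, (H.w e * mval e v) • bsel e := by
    rw [← hθsum]
    calc ∑ y ∈ C₀, θ y • y
        = ∑ y ∈ C₀, ∑ e ∈ H.E, θ y • ((H.w e * mval e v) • bvec (Bof y e)) := by
          refine Finset.sum_congr rfl fun y hy => ?_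
          rw [← Finset.smul_sum, hBof2 y hy]
      _ = ∑ e ∈ H.E, ∑ y ∈ C₀, θ y • ((H.w e * mval e v) • bvec (Bof y e)) :=
          Finset.sum_comm
      _ = ∑ e ∈ H.E, (H.w e * mval e v) • bsel e := by
          refine Finset.sum_congr rfl fun e he => ?_
          rw [show bsel e = ∑ y ∈ C₀, θ y • bvec (Bof y e) from rfl, Finset.smul_sum]
          exact Finset.sum_congr rfl fun y hy => smul_comm _ _ _
  refine ⟨g, p, ⟨bsel, fun e he => ⟨hbselBp e he, fun b' hb' => ?_⟩, ?_⟩, ?_⟩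
  · rw [← hv, hbseldot e he]
    exact dot_le_mval_of_mem_Bp hb' v
  · rw [hpsum]
    exact Finset.sum_congr rfl fun e he => by rw [← hv, hbseldot e he]
  · rw [hp, smul_smul, mul_inv_cancel₀ hl.ne', one_smul]
    abel

lemma resolvent_spec [Nonempty V] (H : Hypergraph V) (hdeg : ∀ x : V, 0 < deg H x)
    {l : ℝ} (hl : 0 < l) (f : V → ℝ) :
    ∃ h ∈ NL H (Resolvent H l f), f = Resolvent H l f + l • h :=
  Classical.epsilon_spec (resolvent_exists H hdeg hl f)

lemma resolvent_eq [Nonempty V] (H : Hypergraph V) (hdeg : ∀ x : V, 0 < deg H x)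
    {l : ℝ} (hl : 0 < l) {f g h : V → ℝ} (hh : h ∈ NL H g) (heq : f = g + l • h) :
    Resolvent H l f = g := by
  obtain ⟨h', hh', heq'⟩ := resolvent_spec H hdeg hl f
  exact resolvent_unique H hdeg hl hh' hh (heq'.symm.trans heq)

lemma Lap_shift_subset (H : Hypergraph V) (v : V → ℝ) (c : ℝ) :
    Lap H (v + fun _ => c) ⊆ Lap H v := by
  have key : ∀ e ∈ H.E, ∀ b ∈ Bp e, dot b (v + fun _ => c) = dot b v := by
    intro e _ b hb
    rw [dot_add_right, dot_const_of_mem_Bp hb, add_zero]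
  rintro h ⟨b, hb, rfl⟩
  refine ⟨b, fun e he => ⟨(hb e he).1, fun b' hb' => ?_⟩, ?_⟩
  · have := (hb e he).2 b' hb'
    rwa [key e he b' hb', key e he _ (hb e he).1] at this
  · exact Finset.sum_congr rfl fun e he => by rw [key e he _ (hb e he).1]

lemma Lap_shift (H : Hypergraph V) (v : V → ℝ) (c : ℝ) :
    Lap H (v + fun _ => c) = Lap H v := by
  apply Set.Subset.antisymm (Lap_shift_subset H v c)
  have : v = (v + fun _ => c) + fun _ => (-c) := by funext z; simp
  conv_lhs => rw [this]
  exact Lap_shift_subset H _ _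

lemma NL_shift (H : Hypergraph V) (hdeg : ∀ x : V, 0 < deg H x) (g : V → ℝ) (c : ℝ) :
    NL H (g + c • deg H) = NL H g := by
  unfold NL
  have hD : Dinv H (g + c • deg H) = Dinv H g + fun _ => c := by
    funext z
    simp only [Dinv, Pi.add_apply, Pi.smul_apply, smul_eq_mul]
    have hz := (hdeg z).ne'
    field_simp
  rw [hD, Lap_shift]

lemma resolvent_shift [Nonempty V] (H : Hypergraph V) (hdeg : ∀ x : V, 0 < deg H x)
    {l : ℝ} (hl : 0 < l) (f : V → ℝ) (c : ℝ) :
    Resolvent H l (f + c • deg H) = Resolvent H l f + c • deg H := by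
  obtain ⟨h, hh, heq⟩ := resolvent_spec H hdeg hl f
  apply resolvent_eq H hdeg hl (h := h)
  · rw [NL_shift H hdeg]; exact hh
  · conv_lhs => rw [heq]
    abel

lemma resolvent_contract [Nonempty V] (H : Hypergraph V) (hdeg : ∀ x : V, 0 < deg H x)
    {l : ℝ} (hl : 0 < l) (f f' : V → ℝ) :
    inn H (Resolvent H l f - Resolvent H l f') (Resolvent H l f - Resolvent H l f')
      ≤ inn H (f - f') (Resolvent H l f - Resolvent H l f') := by
  obtain ⟨h, hh, heq⟩ := resolvent_spec H hdeg hl f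
  obtain ⟨h', hh', heq'⟩ := resolvent_spec H hdeg hl f'
  set g := Resolvent H l f
  set g' := Resolvent H l f'
  have hdiff : f - f' = (g - g') + l • (h - h') := by
    rw [heq, heq', smul_sub]; abel
  rw [hdiff, inn_add_left, inn_smul_left]
  have := NL_mono H hh hh'
  nlinarith

lemma inn_delta_sub (H : Hypergraph V) (f : V → ℝ) (a b : V) :
    inn H f (delta a - delta b) = f a / deg H a - f b / deg H b := by
  unfold inn
  have : ∀ z, f z * (delta a - delta b) z / deg H z
      = (if z = a then f z / deg H z else 0) - (if z = b then f z / deg H z else 0) := by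
    intro z
    simp only [Pi.sub_apply, delta]
    split_ifs <;> ring
  rw [Finset.sum_congr rfl fun z _ => this z, Finset.sum_sub_distrib]
  rw [Finset.sum_ite_eq' Finset.univ a (fun z => f z / deg H z),
    Finset.sum_ite_eq' Finset.univ b (fun z => f z / deg H z)]
  simp

lemma resolvent_ptw [Nonempty V] (H : Hypergraph V) (hdeg : ∀ x : V, 0 < deg H x)
    {l : ℝ} (hl : 0 < l) (f f' : V → ℝ) {M : ℝ} (hM : ∀ z, |f z - f' z| ≤ M)
    {dmax : ℝ} (hdmax : ∀ z, deg H z ≤ dmax) :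
    ∀ z, |Resolvent H l f z - Resolvent H l f' z|
      ≤ dmax * (∑ z, (deg H z)⁻¹) * M := by
  classical
  set u : V → ℝ := Resolvent H l f - Resolvent H l f' with hu
  have hM0 : 0 ≤ M := le_trans (abs_nonneg _) (hM (Classical.arbitrary V))
  set Asum : ℝ := ∑ z, (deg H z)⁻¹ with hAsum
  have hA0 : 0 < Asum := Finset.sum_pos (fun z _ => inv_pos.2 (hdeg z)) Finset.univ_nonempty
  have hdmax0 : 0 < dmax := lt_of_lt_of_le (hdeg (Classical.arbitrary V))
    (hdmax (Classical.arbitrary V))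
  obtain ⟨z₀, _, hz₀⟩ := Finset.exists_mem_eq_sup' Finset.univ_nonempty (fun z => |u z|)
  set Mu : ℝ := Finset.univ.sup' Finset.univ_nonempty (fun z => |u z|) with hMu
  have hMuz : ∀ z, |u z| ≤ Mu := by
    intro z
    rw [hMu]
    exact Finset.le_sup' (fun z => |u z|) (Finset.mem_univ z)
  have hMu0 : 0 ≤ Mu := le_trans (abs_nonneg (u z₀)) (hMuz z₀)
  have h1 : inn H u u ≤ M * Mu * Asum := by
    have hle := resolvent_contract H hdeg hl f f'
    rw [← hu] at hle
    have h2 : inn H (f - f') u ≤ ∑ z, M * Mu * (deg H z)⁻¹ := by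
      unfold inn
      apply Finset.sum_le_sum
      intro z _
      have habs : (f - f') z * u z ≤ M * Mu := by
        calc (f - f') z * u z ≤ |(f - f') z * u z| := le_abs_self _
          _ = |(f - f') z| * |u z| := abs_mul _ _
          _ ≤ M * Mu := mul_le_mul (hM z) (hMuz z) (abs_nonneg _) hM0
      rw [div_eq_mul_inv]
      exact mul_le_mul_of_nonneg_right habs (inv_nonneg.2 (hdeg z).le)
    calc inn H u u ≤ inn H (f - f') u := hle
      _ ≤ ∑ z, M * Mu * (deg H z)⁻¹ := h2
      _ = M * Mu * Asum := by rw [hAsum, ← Finset.mul_sum]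
  have h2 : Mu^2 / dmax ≤ inn H u u := by
    have hterm : u z₀ * u z₀ / deg H z₀ ≤ inn H u u := by
      unfold inn
      exact Finset.single_le_sum (f := fun z => u z * u z / deg H z)
        (fun z _ => div_nonneg (mul_self_nonneg _) (hdeg z).le) (Finset.mem_univ z₀)
    have habs : Mu^2 = u z₀ * u z₀ := by
      rw [hz₀, sq_abs, sq]
    calc Mu^2 / dmax ≤ Mu^2 / deg H z₀ :=
          div_le_div_of_nonneg_left (sq_nonneg _) (hdeg z₀) (hdmax z₀)
      _ = u z₀ * u z₀ / deg H z₀ := by rw [habs]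
      _ ≤ inn H u u := hterm
  have hkey : Mu ≤ dmax * Asum * M := by
    rcases eq_or_lt_of_le hMu0 with h | h
    · rw [← h]; positivity
    · have hsq : Mu^2 ≤ dmax * (M * Mu * Asum) := by
        rw [div_le_iff₀ hdmax0] at h2
        nlinarith
      nlinarith
  intro z
  calc |u z| ≤ Mu := hMuz z
    _ ≤ dmax * Asum * M := hkey
    _ = dmax * (∑ z, (deg H z)⁻¹) * M := by rw [hAsum]

lemma phi_continuous [Nonempty V] (H : Hypergraph V) (hdeg : ∀ x : V, 0 < deg H x)
    {l : ℝ} (hl : 0 < l) (x y : V) :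
    Continuous (fun f : V → ℝ => inn H (Resolvent H l f) (delta x - delta y)) := by
  classical
  set dmax : ℝ := Finset.univ.sup' Finset.univ_nonempty (deg H) with hdm
  have hdmax : ∀ z, deg H z ≤ dmax := fun z => Finset.le_sup' _ (Finset.mem_univ z)
  set C : ℝ := ((deg H x)⁻¹ + (deg H y)⁻¹) * (dmax * (∑ z, (deg H z)⁻¹)) with hC
  have hC0 : 0 ≤ C := by
    have := hdeg x; have := hdeg y
    have h1 : (0:ℝ) < dmax := lt_of_lt_of_le (hdeg (Classical.arbitrary V))
      (hdmax (Classical.arbitrary V))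
    have h2 : (0:ℝ) ≤ ∑ z, (deg H z)⁻¹ :=
      Finset.sum_nonneg fun z _ => (inv_pos.2 (hdeg z)).le
    positivity
  apply LipschitzWith.continuous (K := Real.toNNReal C)
  apply LipschitzWith.of_dist_le_mul
  intro f f'
  have hM : ∀ z, |f z - f' z| ≤ dist f f' := by
    intro z
    rw [← Real.dist_eq]
    exact dist_le_pi_dist f f' z
  have hptw := resolvent_ptw H hdeg hl f f' hM hdmax
  set u : V → ℝ := Resolvent H l f - Resolvent H l f' with hu
  have hux : |u x| ≤ dmax * (∑ z, (deg H z)⁻¹) * dist f f' := hptw x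
  have huy : |u y| ≤ dmax * (∑ z, (deg H z)⁻¹) * dist f f' := hptw y
  rw [Real.dist_eq]
  have hsub : inn H (Resolvent H l f) (delta x - delta y)
      - inn H (Resolvent H l f') (delta x - delta y)
      = u x / deg H x - u y / deg H y := by
    rw [← inn_sub_left, ← hu, inn_delta_sub]
  rw [hsub]
  have h1 : |u x / deg H x - u y / deg H y| ≤ |u x| * (deg H x)⁻¹ + |u y| * (deg H y)⁻¹ := by
    calc |u x / deg H x - u y / deg H y| ≤ |u x / deg H x| + |u y / deg H y| :=
          abs_sub _ _
      _ = |u x| * (deg H x)⁻¹ + |u y| * (deg H y)⁻¹ := by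
          rw [abs_div, abs_div, abs_of_pos (hdeg x), abs_of_pos (hdeg y),
            div_eq_mul_inv, div_eq_mul_inv]
  have hcoe : (Real.toNNReal C : ℝ) = C := Real.coe_toNNReal C hC0
  rw [hcoe]
  have hd0 : (0:ℝ) ≤ dist f f' := dist_nonneg
  have hix : (0:ℝ) ≤ (deg H x)⁻¹ := (inv_pos.2 (hdeg x)).le
  have hiy : (0:ℝ) ≤ (deg H y)⁻¹ := (inv_pos.2 (hdeg y)).le
  calc |u x / deg H x - u y / deg H y|
      ≤ |u x| * (deg H x)⁻¹ + |u y| * (deg H y)⁻¹ := h1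
    _ ≤ (dmax * (∑ z, (deg H z)⁻¹) * dist f f') * (deg H x)⁻¹
        + (dmax * (∑ z, (deg H z)⁻¹) * dist f f') * (deg H y)⁻¹ := by
          apply add_le_add
          · exact mul_le_mul_of_nonneg_right hux hix
          · exact mul_le_mul_of_nonneg_right huy hiy
    _ = C * dist f f' := by rw [hC]; ring

lemma inn_deg_delta (H : Hypergraph V) (hdeg : ∀ x : V, 0 < deg H x) (a b : V) :
    inn H (deg H) (delta a - delta b) = 0 := by
  rw [inn_delta_sub, div_self (hdeg a).ne', div_self (hdeg b).ne', sub_self]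

/-- existence of a `λ`-nonlinear Kantorovich potential. -/
theorem stmt11 [Nonempty V] (H : Hypergraph V) (hconn : Connected H)
    (hdeg : ∀ x : V, 0 < deg H x) (l : ℝ) (hl : 0 < l) (x y : V) :
    ∃ f ∈ Lip1 H, inn H (Resolvent H l f) (delta x - delta y) = KD H l x y := by
  classical
  set φ : (V → ℝ) → ℝ := fun f => inn H (Resolvent H l f) (delta x - delta y) with hφ
  have hφc : Continuous φ := phi_continuous H hdeg hl x y
  set N : ℕ := Finset.univ.sup (fun p : V × V => hdistN H p.1 p.2) with hN
  have hgd : ∀ a b : V, gdist H a b ≤ (N : ℝ) := by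
    intro a b
    exact_mod_cast Nat.cast_le.2 (Finset.le_sup (f := fun p : V × V => hdistN H p.1 p.2)
      (Finset.mem_univ (a, b)))
  set dmax : ℝ := Finset.univ.sup' Finset.univ_nonempty (deg H) with hdm
  have hdmax : ∀ z, deg H z ≤ dmax := fun z => Finset.le_sup' _ (Finset.mem_univ z)
  have hdmax0 : 0 < dmax := lt_of_lt_of_le (hdeg (Classical.arbitrary V))
    (hdmax (Classical.arbitrary V))
  set R : ℝ := dmax * N with hR
  have hR0 : 0 ≤ R := mul_nonneg hdmax0.le (Nat.cast_nonneg N)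
  set K : Set (V → ℝ) := Lip1 H ∩ {f | f x = 0} with hK
  have hKsub : K ⊆ Set.univ.pi (fun _ => Set.Icc (-R) R) := by
    rintro f ⟨hfL, hfx⟩ z _
    have h1 : f z / deg H z ≤ (N : ℝ) := by
      have := hfL z x
      rw [inn_delta_sub, hfx] at this
      simp at this
      exact le_trans this (hgd z x)
    have h2 : -(N : ℝ) ≤ f z / deg H z := by
      have := hfL x z
      rw [inn_delta_sub, hfx] at this
      simp at this
      have := le_trans this (hgd x z)
      linarith
    have hdz := hdeg z
    constructor
    · rw [hR]
      rw [div_le_iff₀ hdz] at h1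
      rw [le_div_iff₀ hdz] at h2
      nlinarith [hdmax z, Nat.cast_nonneg (α := ℝ) N]
    · rw [hR]
      rw [div_le_iff₀ hdz] at h1
      nlinarith [hdmax z, Nat.cast_nonneg (α := ℝ) N]
  have hKclosed : IsClosed K := by
    apply IsClosed.inter
    · have : Lip1 H = ⋂ a : V, ⋂ b : V, {f : V → ℝ | inn H f (delta a - delta b) ≤ gdist H a b} := by
        ext f; simp [Lip1, Set.mem_iInter]
      rw [this]
      refine isClosed_iInter fun a => isClosed_iInter fun b => ?_
      apply isClosed_le ?_ continuous_const
      unfold inn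
      exact continuous_finset_sum _ fun z _ =>
        ((continuous_apply z).mul continuous_const).div_const _
    · exact isClosed_eq (continuous_apply x) continuous_const
  have hKcomp : IsCompact K :=
    IsCompact.of_isClosed_subset (isCompact_univ_pi fun _ => isCompact_Icc) hKclosed hKsub
  have h0K : (0 : V → ℝ) ∈ K := by
    constructor
    · intro a b
      have : inn H (0 : V → ℝ) (delta a - delta b) = 0 := by simp [inn]
      rw [this]
      exact_mod_cast Nat.cast_nonneg (hdistN H a b)
    · rfl
  obtain ⟨fstar, hfstarK, hfmax⟩ := hKcomp.exists_isMaxOn ⟨0, h0K⟩ hφc.continuousOn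
  -- every Lipschitz function is dominated after normalization
  have hdom : ∀ f ∈ Lip1 H, φ f ≤ φ fstar := by
    intro f hf
    set c : ℝ := f x / deg H x with hc
    set f' : V → ℝ := f - c • deg H with hf'
    have hf'L : f' ∈ Lip1 H := by
      intro a b
      rw [hf', inn_sub_left, inn_smul_left, inn_deg_delta H hdeg]
      simpa using hf a b
    have hf'x : f' x = 0 := by
      rw [hf']
      simp only [Pi.sub_apply, Pi.smul_apply, smul_eq_mul, hc]
      field_simp
      rw [div_self (hdeg x).ne', sub_self, mul_zero]
    have hfeq : f = f' + c • deg H := by rw [hf']; abel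
    have hres : Resolvent H l f = Resolvent H l f' + c • deg H := by
      rw [hfeq]
      exact resolvent_shift H hdeg hl f' c
    have hφeq : φ f = φ f' := by
      rw [hφ]
      simp only
      rw [hres, inn_add_left, inn_smul_left, inn_deg_delta H hdeg, mul_zero, add_zero]
    rw [hφeq]
    exact hfmax ⟨hf'L, hf'x⟩
  refine ⟨fstar, hfstarK.1, ?_⟩
  have hmemS : φ fstar ∈ { r | ∃ f ∈ Lip1 H, r = inn H (Resolvent H l f) (delta x - delta y) } :=
    ⟨fstar, hfstarK.1, rfl⟩
  have hub : ∀ r ∈ { r | ∃ f ∈ Lip1 H, r = inn H (Resolvent H l f) (delta x - delta y) },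
      r ≤ φ fstar := by
    rintro r ⟨f, hf, rfl⟩
    exact hdom f hf
  rw [KD]
  exact le_antisymm (le_csSup ⟨φ fstar, hub⟩ hmemS) (csSup_le ⟨φ fstar, hmemS⟩ hub)

end HypRicci
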